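/- Let N+ be a rooted binary phylogenetic network on taxon set X with |X| ≥ 4 and let Q = {a,b,c,d} ⊆ X. The following are equivalent: (1) Q determines a blob of N+ (i.e., Q is a B-quartet); (2) there is a single blob of N+ such that deletion of all edges of that blob leaves the elements of Q in four distinct connected components; (3) the unresolved quartet on Q is displayed on the reduced unrooted tree of blobs T_rd(N−), i.e., no edge of T_rd(N−) separates exactly two elements of Q from the other two. -/

import Mathlib

/-!
# Common framework

Finite directed multigraphs, undirected connectivity, numbers of connected
components, cut edges, subgraphs, blobs, blobs determined by leaf sets,
B-quartets, and quartets displayed via cut-edge separation.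

A *network* is modelled as a finite directed multigraph (edge directions are
simply ignored for the undirected notions of connectivity, cut edges and
blobs).
-/

/-- A finite directed multigraph: finite types of nodes and of edges, with
source and target maps. -/
structure MDigraph where
  V : Type
  E : Type
  finV : Finite V
  finE : Finite E
  src : E → V
  tgt : E → V

attribute [instance] MDigraph.finV MDigraph.finE

namespace MDigraph

section Basic

variable (G : MDigraph)

/-- One undirected step between `u` and `v` along an edge from the set `F`. -/
def Step (F : Set G.E) (u v : G.V) : Prop :=
  ∃ e ∈ F, (G.src e = u ∧ G.tgt e = v) ∨ (G.src e = v ∧ G.tgt e = u)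

/-- Undirected reachability (an undirected path) using only edges in `F`. -/
def Conn (F : Set G.E) (u v : G.V) : Prop :=
  Relation.ReflTransGen (G.Step F) u v

/-- One directed step from `u` to `v` along an edge from the set `F`. -/
def DStep (F : Set G.E) (u v : G.V) : Prop :=
  ∃ e ∈ F, G.src e = u ∧ G.tgt e = v

/-- Directed reachability (a directed path) using only edges in `F`. -/
def DConn (F : Set G.E) (u v : G.V) : Prop :=
  Relation.ReflTransGen (G.DStep F) u v

/-- `u` is above (ancestral to) `v`: there is a directed path from `u` to `v`. -/
def Above (u v : G.V) : Prop := G.DConn Set.univ u v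

/-- In-degree of a node. -/
noncomputable def inDeg (v : G.V) : ℕ := Nat.card {e : G.E // G.tgt e = v}

/-- Out-degree of a node. -/
noncomputable def outDeg (v : G.V) : ℕ := Nat.card {e : G.E // G.src e = v}

/-- Undirected degree of a node (a loop counts twice). -/
noncomputable def degree (v : G.V) : ℕ := G.inDeg v + G.outDeg v

/-- The number of connected components of the graph with node set `W` and edge
set the restriction to `W` of `F` (two nodes of `W` lie in the same connected
component iff they are joined by an undirected path). -/
noncomputable def numComponents (W : Set G.V) (F : Set G.E) : ℕ :=
  Nat.card (Quot (fun u v : W => G.Step {e ∈ F | G.src e ∈ W ∧ G.tgt e ∈ W} u.1 v.1))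

/-- `v` lies on every directed path from `u` to `w`: there is no directed path
from `u` to `w` all of whose nodes avoid `v`. -/
def OnEveryPath (v u w : G.V) : Prop :=
  ¬ (u ≠ v ∧ w ≠ v ∧
      Relation.ReflTransGen (fun a b => G.DStep Set.univ a b ∧ a ≠ v ∧ b ≠ v) u w)

end Basic

/-- A subgraph (subnetwork): a set of nodes together with a set of edges
joining them. -/
structure Subgraph (G : MDigraph) where
  verts : Set G.V
  edges : Set G.E
  src_mem : ∀ e ∈ edges, G.src e ∈ verts
  tgt_mem : ∀ e ∈ edges, G.tgt e ∈ verts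

/-- The whole graph, as a subgraph of itself. -/
def top (G : MDigraph) : Subgraph G :=
  ⟨Set.univ, Set.univ, fun _ _ => Set.mem_univ _, fun _ _ => Set.mem_univ _⟩

namespace Subgraph

variable {G : MDigraph}

/-- Containment of subgraphs. -/
def le (H K : Subgraph G) : Prop := H.verts ⊆ K.verts ∧ H.edges ⊆ K.edges

/-- The subgraph `H` is connected. -/
def IsConnected (H : Subgraph G) : Prop :=
  H.verts.Nonempty ∧ ∀ u ∈ H.verts, ∀ v ∈ H.verts, G.Conn H.edges u v

/-- Delete an edge from a subgraph. -/
def deleteEdge (H : Subgraph G) (e : G.E) : Subgraph G :=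
  ⟨H.verts, H.edges \ {e}, fun e' he' => H.src_mem e' he'.1,
    fun e' he' => H.tgt_mem e' he'.1⟩

/-- The number of connected components of a subgraph. -/
noncomputable def numComponents (H : Subgraph G) : ℕ :=
  G.numComponents H.verts H.edges

/-- `e` is a cut edge of the (sub)graph `H`: deleting it increases the number
of connected components. -/
def IsCutEdge (H : Subgraph G) (e : G.E) : Prop :=
  e ∈ H.edges ∧ H.numComponents < (H.deleteEdge e).numComponents

end Subgraph

variable {G : MDigraph}

/-- `B` is a blob of the network `H`: a maximal connected subnetwork of `H`
having no cut edges.  (A blob is *trivial* if it consists of a single node.) -/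
def IsBlobIn (H B : Subgraph G) : Prop :=
  B.le H ∧ B.IsConnected ∧ (∀ e, ¬ B.IsCutEdge e) ∧
    ∀ B' : Subgraph G, B'.le H → B'.IsConnected → (∀ e, ¬ B'.IsCutEdge e) →
      B.le B' → B'.le B

/-- `e` is a cut edge of the network `H` incident to the blob `B`: exactly one
of its endpoints is a node of `B`. -/
def IncidentCut (H B : Subgraph G) (e : G.E) : Prop :=
  H.IsCutEdge e ∧ Xor' (G.src e ∈ B.verts) (G.tgt e ∈ B.verts)

/-- The blob `B` of the network `H` is determined by the set `S` of leaf
labels: deletion of the cut edges of `H` incident to `B` leaves the nodes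
labelled by the elements of `S` in distinct connected components. -/
def DeterminesIn {X : Type} (H B : Subgraph G) (leaf : X → G.V) (S : Set X) : Prop :=
  ∀ s ∈ S, ∀ t ∈ S, s ≠ t →
    ¬ G.Conn {e ∈ H.edges | ¬ IncidentCut H B e} (leaf s) (leaf t)

/-- Four taxa form a B-quartet on the network `H`: some blob of `H` is
determined by them. -/
def BQuartetIn {X : Type} (H : Subgraph G) (leaf : X → G.V) (a b c d : X) : Prop :=
  ∃ B : Subgraph G, IsBlobIn H B ∧ DeterminesIn H B leaf ({a, b, c, d} : Set X)

/-- Some cut edge of `H` separates the taxa `p, q` from the taxa `r, s`: after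
its deletion `p, q` lie in one connected component and `r, s` in another.  For
a 4-taxon set `{p,q,r,s}` this says exactly that the (reduced unrooted) tree of
blobs of `H` displays the resolved quartet `pq|rs` (the edges of the tree of
blobs correspond exactly to the cut edges of the network, and suppressing
degree-2 nodes or contracting blobs does not affect which taxa a cut edge
separates). -/
def CutSep {X : Type} (H : Subgraph G) (leaf : X → G.V) (p q r s : X) : Prop :=
  ∃ e, H.IsCutEdge e ∧
    G.Conn (H.edges \ {e}) (leaf p) (leaf q) ∧
    G.Conn (H.edges \ {e}) (leaf r) (leaf s) ∧
    ¬ G.Conn (H.edges \ {e}) (leaf p) (leaf r)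

end MDigraph
open MDigraph in
/-- A rooted binary phylogenetic network on the taxon set `X`: a connected
directed acyclic graph whose node set consists of a root (in-degree 0,
out-degree 2), leaves (in-degree 1, out-degree 0) bijectively labelled by `X`,
tree nodes (in-degree 1, out-degree 2) and hybrid nodes (in-degree 2,
out-degree 1). -/
structure PhyloNetwork (X : Type) extends MDigraph where
  root : toMDigraph.V
  leaf : X → toMDigraph.V
  leaf_inj : Function.Injective leaf
  root_in : toMDigraph.inDeg root = 0
  root_out : toMDigraph.outDeg root = 2
  leaf_in : ∀ x, toMDigraph.inDeg (leaf x) = 1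
  leaf_out : ∀ x, toMDigraph.outDeg (leaf x) = 0
  internal : ∀ v, v ≠ root → (∀ x, v ≠ leaf x) →
      (toMDigraph.inDeg v = 1 ∧ toMDigraph.outDeg v = 2) ∨
      (toMDigraph.inDeg v = 2 ∧ toMDigraph.outDeg v = 1)
  acyclic : ∀ v, ¬ Relation.TransGen (toMDigraph.DStep Set.univ) v v
  conn : ∀ u v, toMDigraph.Conn Set.univ u v

namespace PhyloNetwork

open MDigraph

variable {X : Type} (N : PhyloNetwork X)

/-- The subnetwork of `N⁺` consisting of all nodes and edges ancestral to at
least one taxon in `Y`.  Since suppressing nodes of in- and out-degree 1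
affects neither blobs, nor cut edges, nor which sets of taxa they separate,
this subnetwork faithfully represents the induced network `N⁺_Y`. -/
def inducedSub (Y : Set X) : Subgraph N.toMDigraph where
  verts := {v | ∃ y ∈ Y, N.toMDigraph.Above v (N.leaf y)}
  edges := {e | ∃ y ∈ Y, N.toMDigraph.Above (N.toMDigraph.tgt e) (N.leaf y)}
  src_mem := by
    rintro e ⟨y, hy, h⟩
    exact ⟨y, hy, Relation.ReflTransGen.head ⟨e, Set.mem_univ e, rfl, rfl⟩ h⟩
  tgt_mem := by
    rintro e ⟨y, hy, h⟩
    exact ⟨y, hy, h⟩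

/-- `v` is a stable ancestor of the leaves: it is ancestral to every leaf and
lies on every directed path from the root to any leaf. -/
def IsStableAncestor (v : N.toMDigraph.V) : Prop :=
  (∀ x, N.toMDigraph.Above v (N.leaf x)) ∧
  ∀ x, N.toMDigraph.OnEveryPath v N.root (N.leaf x)

/-- `v` is the lowest stable ancestor (LSA) of the network: a stable ancestor
below all stable ancestors. -/
def IsLSA (v : N.toMDigraph.V) : Prop :=
  N.IsStableAncestor v ∧ ∀ u, N.IsStableAncestor u → N.toMDigraph.Above u v

/-- The number of cut edges of `N⁺` incident to the blob `B`. -/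
noncomputable def blobDeg (B : Subgraph N.toMDigraph) : ℕ :=
  Nat.card {e : N.toMDigraph.E // IncidentCut (top N.toMDigraph) B e}

/-- `B` is an `m`-blob of the rooted network `N⁺`: if the root is not in `B`
then `B` has exactly `m` incident cut edges, while if the root is in `B` then
`B` has exactly `m - 1` incident cut edges. -/
def IsMBlob (B : Subgraph N.toMDigraph) (m : ℕ) : Prop :=
  IsBlobIn (top N.toMDigraph) B ∧
    ((N.root ∈ B.verts ∧ m = N.blobDeg B + 1) ∨ (N.root ∉ B.verts ∧ m = N.blobDeg B))

end PhyloNetwork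

open MDigraph

namespace MDigraph

section Aux

variable {G : MDigraph}

lemma Step.symm {F : Set G.E} {u v : G.V} (h : G.Step F u v) : G.Step F v u := by
  obtain ⟨e, he, h⟩ := h; exact ⟨e, he, h.symm⟩

lemma step_symmetric (F : Set G.E) : Symmetric (G.Step F) := fun _ _ h => h.symm

lemma Conn.symm {F : Set G.E} {u v : G.V} (h : G.Conn F u v) : G.Conn F v u :=
  by
    haveI : Std.Symm (G.Step F) := ⟨fun _ _ h' => step_symmetric F h'⟩
    exact Std.Symm.symm (r := Relation.ReflTransGen (G.Step F)) _ _ h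

lemma Conn.trans {F : Set G.E} {u v w : G.V} (h : G.Conn F u v) (h' : G.Conn F v w) :
    G.Conn F u w := Relation.ReflTransGen.trans h h'

lemma conn_refl (F : Set G.E) (u : G.V) : G.Conn F u u := Relation.ReflTransGen.refl

lemma Step.mono {F F' : Set G.E} (hFF : F ⊆ F') {u v : G.V} (h : G.Step F u v) :
    G.Step F' u v := by obtain ⟨e, he, h⟩ := h; exact ⟨e, hFF he, h⟩

lemma Conn.mono {F F' : Set G.E} (hFF : F ⊆ F') {u v : G.V} (h : G.Conn F u v) :
    G.Conn F' u v := Relation.ReflTransGen.mono (r := G.Step F) (p := G.Step F')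
      (fun _ _ (hs : G.Step F _ _) => hs.mono hFF) u v h

lemma step_conn {F : Set G.E} {u v : G.V} (h : G.Step F u v) : G.Conn F u v :=
  Relation.ReflTransGen.single h

lemma conn_of_edge {F : Set G.E} {e : G.E} (he : e ∈ F) : G.Conn F (G.src e) (G.tgt e) :=
  step_conn ⟨e, he, Or.inl ⟨rfl, rfl⟩⟩

/-- EqvGen = ReflTransGen for symmetric relations. -/
lemma eqvGen_iff_rtg {α : Type*} {r : α → α → Prop} (hr : Symmetric r) {a b : α} :
    Relation.EqvGen r a b ↔ Relation.ReflTransGen r a b := by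
  constructor
  · intro h
    induction h with
    | rel x y h => exact Relation.ReflTransGen.single h
    | refl x => exact Relation.ReflTransGen.refl
    | symm x y _ ih =>
      haveI : Std.Symm r := ⟨fun _ _ h => hr h⟩
      exact Std.Symm.symm (r := Relation.ReflTransGen r) _ _ ih
    | trans x y z _ _ ih₁ ih₂ => exact ih₁.trans ih₂
  · intro h
    induction h with
    | refl => exact Relation.EqvGen.refl _
    | tail _ hs ih => exact Relation.EqvGen.trans _ _ _ ih (Relation.EqvGen.rel _ _ hs)

/-- The relation used in `numComponents`. -/
def rrel (W : Set G.V) (F : Set G.E) : W → W → Prop :=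
  fun u v => G.Step {e ∈ F | G.src e ∈ W ∧ G.tgt e ∈ W} u.1 v.1

lemma numComponents_eq_card (W : Set G.V) (F : Set G.E) :
    G.numComponents W F = Nat.card (Quot (rrel W F)) := rfl

lemma rrel_symmetric (W : Set G.V) (F : Set G.E) : Symmetric (rrel W F) :=
  fun _ _ h => Step.symm h

lemma rrel_mono {W : Set G.V} {F F' : Set G.E} (h : F ⊆ F') {u v : W} :
    rrel W F u v → rrel W F' u v := by
  rintro ⟨e, ⟨he1, he2⟩, hor⟩
  exact ⟨e, ⟨h he1, he2⟩, hor⟩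

lemma rtg_rrel_iff_conn {W : Set G.V} {F : Set G.E} {u v : W} :
    Relation.ReflTransGen (rrel W F) u v ↔
      G.Conn {e ∈ F | G.src e ∈ W ∧ G.tgt e ∈ W} u.1 v.1 := by
  constructor
  · intro h
    exact Relation.ReflTransGen.lift (p := G.Step {e ∈ F | G.src e ∈ W ∧ G.tgt e ∈ W})
      Subtype.val (fun _ _ h => h) _ _ h
  · intro h
    have key : ∀ y, G.Conn {e ∈ F | G.src e ∈ W ∧ G.tgt e ∈ W} u.1 y →
        ∃ hy : y ∈ W, Relation.ReflTransGen (rrel W F) u ⟨y, hy⟩ := by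
      intro y hy
      induction hy with
      | refl => exact ⟨u.2, Relation.ReflTransGen.refl⟩
      | tail _ hs ih =>
        obtain ⟨hx, ihx⟩ := ih
        obtain ⟨e, he, hor⟩ := hs
        rcases hor with ⟨h1, h2⟩ | ⟨h1, h2⟩
        · exact ⟨h2 ▸ he.2.2, ihx.tail ⟨e, he, Or.inl ⟨h1, h2⟩⟩⟩
        · exact ⟨h1 ▸ he.2.1, ihx.tail ⟨e, he, Or.inr ⟨h1, h2⟩⟩⟩
    obtain ⟨hy, hc⟩ := key v.1 h
    exact hc
    
lemma quot_rrel_eq_iff {W : Set G.V} {F : Set G.E} {u v : W} :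
    Quot.mk (rrel W F) u = Quot.mk (rrel W F) v ↔
      G.Conn {e ∈ F | G.src e ∈ W ∧ G.tgt e ∈ W} u.1 v.1 := by
  rw [Quot.eq, eqvGen_iff_rtg (rrel_symmetric W F), rtg_rrel_iff_conn]

/-- For finite types, a surjection between types of equal cardinality is injective. -/
lemma surj_inj_of_card_eq {α β : Type*} [Finite α] [Finite β] (f : α → β)
    (hs : Function.Surjective f) (hc : Nat.card α = Nat.card β) : Function.Injective f := by
  have : Fintype α := Fintype.ofFinite α
  have : Fintype β := Fintype.ofFinite β
  have hc' : Fintype.card α = Fintype.card β := by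
    rwa [Nat.card_eq_fintype_card, Nat.card_eq_fintype_card] at hc
  exact (((Fintype.bijective_iff_surjective_and_card f).2 ⟨hs, hc'⟩)).injective

/-- Fewer edges means at least as many components. -/
lemma numComponents_le {W : Set G.V} {F F' : Set G.E} (h : F' ⊆ F) :
    G.numComponents W F ≤ G.numComponents W F' := by
  rw [numComponents_eq_card, numComponents_eq_card]
  have hsurj : Function.Surjective
      (Quot.lift (fun u => Quot.mk (rrel W F) u)
        (fun a b hab => Quot.sound (rrel_mono h hab)) :
        Quot (rrel W F') → Quot (rrel W F)) := by
    intro q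
    obtain ⟨u, rfl⟩ := Quot.exists_rep q
    exact ⟨Quot.mk _ u, rfl⟩
  exact Nat.card_le_card_of_surjective _ hsurj

end Aux

end MDigraph
namespace MDigraph

section Aux2

variable {G : MDigraph}

lemma numComponents_eq_of_conn {W : Set G.V} {F : Set G.E} {e : G.E}
    (heF : e ∈ F) (hsW : G.src e ∈ W) (htW : G.tgt e ∈ W)
    (hconn : G.Conn {g ∈ F \ {e} | G.src g ∈ W ∧ G.tgt g ∈ W} (G.src e) (G.tgt e)) :
    G.numComponents W F = G.numComponents W (F \ {e}) := by
  rw [numComponents_eq_card, numComponents_eq_card]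
  have hd : F \ {e} ⊆ F := Set.diff_subset
  -- maps in both directions
  have hsound : ∀ a b : W, rrel W F a b →
      Quot.mk (rrel W (F \ {e})) a = Quot.mk (rrel W (F \ {e})) b := by
    rintro a b ⟨g, ⟨hgF, hgsW, hgtW⟩, hor⟩
    by_cases hge : g = e
    · subst hge
      have hst : Quot.mk (rrel W (F \ {g})) ⟨G.src g, hgsW⟩ =
          Quot.mk (rrel W (F \ {g})) ⟨G.tgt g, hgtW⟩ := quot_rrel_eq_iff.2 hconn
      rcases hor with ⟨h1, h2⟩ | ⟨h1, h2⟩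
      · have ha : a = ⟨G.src g, hgsW⟩ := Subtype.ext h1.symm
        have hb : b = ⟨G.tgt g, hgtW⟩ := Subtype.ext h2.symm
        rw [ha, hb]; exact hst
      · have ha : a = ⟨G.tgt g, hgtW⟩ := Subtype.ext h2.symm
        have hb : b = ⟨G.src g, hgsW⟩ := Subtype.ext h1.symm
        rw [ha, hb]; exact hst.symm
    · exact Quot.sound ⟨g, ⟨⟨hgF, hge⟩, hgsW, hgtW⟩, hor⟩
  let F' : Set G.E := F \ {e}
  let f : Quot (rrel W F') → Quot (rrel W F) :=
    Quot.lift (fun u => Quot.mk (rrel W F) u) (fun a b hab => Quot.sound (rrel_mono hd hab))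
  let g : Quot (rrel W F) → Quot (rrel W F') :=
    Quot.lift (fun u => Quot.mk (rrel W F') u) hsound
  have hbij : Function.Bijective f := by
    constructor
    · intro q q' hq
      obtain ⟨u, rfl⟩ := Quot.exists_rep q
      obtain ⟨u', rfl⟩ := Quot.exists_rep q'
      have : g (f (Quot.mk _ u)) = g (f (Quot.mk _ u')) := by rw [hq]
      simpa [f, g] using this
    · intro q
      obtain ⟨u, rfl⟩ := Quot.exists_rep q
      exact ⟨Quot.mk _ u, rfl⟩
  exact (Nat.card_eq_of_bijective f hbij).symm

/-- Characterization of cut edges of a subgraph by connectivity. -/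
lemma isCutEdge_iff (H : Subgraph G) (e : G.E) :
    H.IsCutEdge e ↔ e ∈ H.edges ∧
      ¬ G.Conn {g ∈ H.edges \ {e} | G.src g ∈ H.verts ∧ G.tgt g ∈ H.verts}
        (G.src e) (G.tgt e) := by
  constructor
  · rintro ⟨he, hlt⟩
    exact ⟨he, fun hconn => absurd hlt (not_lt.2
      (numComponents_eq_of_conn he (H.src_mem e he) (H.tgt_mem e he) hconn).ge)⟩
  · rintro ⟨he, hnc⟩
    refine ⟨he, lt_of_le_of_ne (numComponents_le Set.diff_subset) fun heq => hnc ?_⟩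
    -- equal cardinalities: the natural surjection is injective
    have hsurj : Function.Surjective
        (Quot.lift (fun u => Quot.mk (rrel H.verts H.edges) u)
          (fun a b hab => Quot.sound (rrel_mono Set.diff_subset hab)) :
          Quot (rrel H.verts (H.edges \ {e})) → Quot (rrel H.verts H.edges)) := by
      intro q; obtain ⟨u, rfl⟩ := Quot.exists_rep q; exact ⟨Quot.mk _ u, rfl⟩
    have hinj := surj_inj_of_card_eq _ hsurj (by
      rw [← numComponents_eq_card, ← numComponents_eq_card]
      exact heq.symm)
    have hsW := H.src_mem e he
    have htW := H.tgt_mem e he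
    have : Quot.mk (rrel H.verts H.edges) (⟨G.src e, hsW⟩ : H.verts) =
        Quot.mk (rrel H.verts H.edges) ⟨G.tgt e, htW⟩ :=
      Quot.sound ⟨e, ⟨he, hsW, htW⟩, Or.inl ⟨rfl, rfl⟩⟩
    have h2 : Quot.mk (rrel H.verts (H.edges \ {e})) ⟨G.src e, hsW⟩ =
        Quot.mk (rrel H.verts (H.edges \ {e})) ⟨G.tgt e, htW⟩ := @hinj (Quot.mk _ _) (Quot.mk _ _) this
    exact quot_rrel_eq_iff.1 h2

/-- Bridges: cut edges of the full graph. -/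
def IsBridge (G : MDigraph) (e : G.E) : Prop :=
  ¬ G.Conn (Set.univ \ {e}) (G.src e) (G.tgt e)

lemma top_isCutEdge_iff (e : G.E) : (top G).IsCutEdge e ↔ G.IsBridge e := by
  rw [isCutEdge_iff]
  have hset : {g ∈ (top G).edges \ {e} | G.src g ∈ (top G).verts ∧ G.tgt g ∈ (top G).verts}
      = Set.univ \ {e} := by
    ext g; simp [top]
  rw [hset]
  simp [top, IsBridge]

end Aux2

end MDigraph
namespace MDigraph

section Aux3

variable {G : MDigraph}

/-- Upgrade a walk: if every edge of `F` preserves a predicate `P`, a walk from a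
vertex satisfying `P` uses only edges with both endpoints satisfying `P`. -/
lemma conn_upgrade {F : Set G.E} {P : G.V → Prop}
    (hP : ∀ e ∈ F, (P (G.src e) ↔ P (G.tgt e))) {u v : G.V}
    (h : G.Conn F u v) (hu : P u) :
    G.Conn {e ∈ F | P (G.src e) ∧ P (G.tgt e)} u v ∧ P v := by
  induction h with
  | refl => exact ⟨conn_refl _ _, hu⟩
  | tail _ hs ih =>
    obtain ⟨ihc, ihP⟩ := ih
    obtain ⟨e, he, hor⟩ := hs
    rcases hor with ⟨h1, h2⟩ | ⟨h1, h2⟩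
    · have hPs : P (G.src e) := by rw [h1]; exact ihP
      have hPt : P (G.tgt e) := (hP e he).1 hPs
      exact ⟨ihc.tail ⟨e, ⟨he, hPs, hPt⟩, Or.inl ⟨h1, h2⟩⟩, h2 ▸ hPt⟩
    · have hPt : P (G.tgt e) := by rw [h2]; exact ihP
      have hPs : P (G.src e) := (hP e he).2 hPt
      exact ⟨ihc.tail ⟨e, ⟨he, hPs, hPt⟩, Or.inr ⟨h1, h2⟩⟩, h1 ▸ hPs⟩

lemma conn_avoid {F : Set G.E} {f : G.E} (hf : f ∉ F) {u v : G.V}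
    (h : G.Conn F u v) : G.Conn (Set.univ \ {f}) u v :=
  h.mono (fun g hg => show g ∈ Set.univ \ {f} from
    ⟨Set.mem_univ g, fun hgf => hf (Set.mem_singleton_iff.1 hgf ▸ hg)⟩)

/-- Every vertex lies on the side of `src f` or of `tgt f`. -/
lemma side_cover (Gconn : ∀ u v, G.Conn Set.univ u v) (f : G.E) (x : G.V) :
    G.Conn (Set.univ \ {f}) x (G.src f) ∨ G.Conn (Set.univ \ {f}) x (G.tgt f) := by
  have key : ∀ y, G.Conn Set.univ (G.src f) y →
      G.Conn (Set.univ \ {f}) y (G.src f) ∨ G.Conn (Set.univ \ {f}) y (G.tgt f) := by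
    intro y hy
    induction hy with
    | refl => exact Or.inl (conn_refl _ _)
    | tail _ hs ih =>
      obtain ⟨e, -, hor⟩ := hs
      by_cases hef : e = f
      · subst hef
        rcases hor with ⟨h1, h2⟩ | ⟨h1, h2⟩
        · exact Or.inr (h2 ▸ conn_refl _ _)
        · exact Or.inl (h1 ▸ conn_refl _ _)
      · have hstep : G.Step (Set.univ \ {f}) _ _ :=
          ⟨e, ⟨Set.mem_univ e, fun h => hef (Set.mem_singleton_iff.1 h)⟩, hor⟩
        rcases ih with h | h
        · exact Or.inl ((step_conn hstep.symm).trans h)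
        · exact Or.inr ((step_conn hstep.symm).trans h)
  exact (key x (Gconn _ _)).imp (fun h => h) (fun h => h)

/-- Dropping a bridge from a walk whose endpoints lie on the same side of it. -/
lemma conn_drop_bridge (Gconn : ∀ u v, G.Conn Set.univ u v) {f : G.E}
    (hf : G.IsBridge f) {F : Set G.E} {p q : G.V} (hpq : G.Conn F p q)
    (hside : G.Conn (Set.univ \ {f}) p q) : G.Conn (F \ {f}) p q := by
  -- cs : endpoint of f on p's side, ct : other endpoint
  obtain ⟨cs, ct, hcs, hct, hends⟩ :
      ∃ cs ct, G.Conn (Set.univ \ {f}) p cs ∧ ¬ G.Conn (Set.univ \ {f}) p ct ∧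
        ((cs = G.src f ∧ ct = G.tgt f) ∨ (cs = G.tgt f ∧ ct = G.src f)) := by
    by_cases hps : G.Conn (Set.univ \ {f}) p (G.src f)
    · refine ⟨G.src f, G.tgt f, hps, fun hpt => hf ?_, Or.inl ⟨rfl, rfl⟩⟩
      exact (hps.symm.trans hpt)
    · rcases side_cover Gconn f p with h | h
      · exact absurd h hps
      · exact ⟨G.tgt f, G.src f, h, hps, Or.inr ⟨rfl, rfl⟩⟩
  have key : ∀ y, G.Conn F p y →
      (G.Conn (Set.univ \ {f}) p y → G.Conn (F \ {f}) p y) ∧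
      (¬ G.Conn (Set.univ \ {f}) p y →
        G.Conn (F \ {f}) p cs ∧ G.Conn (F \ {f}) ct y) := by
    intro y hy
    induction hy with
    | refl =>
      exact ⟨fun _ => conn_refl _ _, fun hn => absurd (conn_refl _ _) hn⟩
    | @tail x z _ hs ih =>
      obtain ⟨g, hgF, hor⟩ := hs
      by_cases hgf : g = f
      · subst hgf
        have hxz : (x = cs ∧ z = ct) ∨ (x = ct ∧ z = cs) := by
          rcases hor with ⟨h1, h2⟩ | ⟨h1, h2⟩ <;> rcases hends with ⟨e1, e2⟩ | ⟨e1, e2⟩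
          · exact Or.inl ⟨(e1.trans h1).symm ▸ rfl, (e2.trans h2).symm ▸ rfl⟩
          · exact Or.inr ⟨(e2.trans h1).symm ▸ rfl, (e1.trans h2).symm ▸ rfl⟩
          · exact Or.inr ⟨(e2.trans h2).symm ▸ rfl, (e1.trans h1).symm ▸ rfl⟩
          · exact Or.inl ⟨(e1.trans h2).symm ▸ rfl, (e2.trans h1).symm ▸ rfl⟩
        rcases hxz with ⟨hx, hz⟩ | ⟨hx, hz⟩
        · -- x = cs, z = ct
          subst hx; subst hz
          refine ⟨fun hpz => absurd hpz hct, fun _ => ⟨ih.1 hcs, conn_refl _ _⟩⟩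
        · -- x = ct, z = cs
          subst hx; subst hz
          have h2 := ih.2 hct
          exact ⟨fun _ => h2.1, fun hn => absurd hcs hn⟩
      · have hgmem : g ∈ F \ {f} := ⟨hgF, fun h => hgf (Set.mem_singleton_iff.1 h)⟩
        have hgmem' : g ∈ Set.univ \ {f} := ⟨Set.mem_univ g, fun h => hgf (Set.mem_singleton_iff.1 h)⟩
        have hstep : G.Step (F \ {f}) x z := ⟨g, hgmem, hor⟩
        have hsxz : G.Conn (Set.univ \ {f}) x z := step_conn ⟨g, hgmem', hor⟩
        by_cases hpx : G.Conn (Set.univ \ {f}) p x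
        · have hpz : G.Conn (Set.univ \ {f}) p z := hpx.trans hsxz
          exact ⟨fun _ => (ih.1 hpx).tail hstep, fun hn => absurd hpz hn⟩
        · have hpz : ¬ G.Conn (Set.univ \ {f}) p z :=
            fun h => hpx (h.trans hsxz.symm)
          have h2 := ih.2 hpx
          exact ⟨fun h => absurd h hpz, fun _ => ⟨h2.1, h2.2.tail hstep⟩⟩
  exact (key q hpq).1 hside

/-- Purge all bridges from a walk, provided the endpoints lie on the same side
of each bridge. -/
lemma conn_purge (Gconn : ∀ u v, G.Conn Set.univ u v) {p q : G.V} :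
    ∀ F : Set G.E, G.Conn F p q →
      (∀ f, G.IsBridge f → G.Conn (Set.univ \ {f}) p q) →
      G.Conn {g ∈ F | ¬ G.IsBridge g} p q := by
  intro F
  generalize hn : {g ∈ F | G.IsBridge g}.ncard = n
  induction n using Nat.strong_induction_on generalizing F with
  | _ n ih =>
    intro hconn hside
    by_cases hex : ∃ f ∈ F, G.IsBridge f
    · obtain ⟨f, hfF, hbf⟩ := hex
      have hdrop := conn_drop_bridge Gconn hbf hconn (hside f hbf)
      have hlt : {g ∈ F \ {f} | G.IsBridge g}.ncard < n := by
        rw [← hn]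
        apply Set.ncard_lt_ncard _ (Set.toFinite _)
        constructor
        · rintro g ⟨⟨hg1, _⟩, hg2⟩; exact ⟨hg1, hg2⟩
        · intro hsub
          have := hsub ⟨hfF, hbf⟩
          exact this.1.2 rfl
      have := ih _ hlt (F \ {f}) rfl hdrop hside
      exact this.mono (fun g hg => show g ∈ {g ∈ F | ¬ G.IsBridge g} from ⟨hg.1.1, hg.2⟩)
    · refine hconn.mono (fun g hg => show g ∈ {g ∈ F | ¬ G.IsBridge g} from
        ⟨hg, fun hb => hex ⟨g, hg, hb⟩⟩)

/-- The endpoints of a non-bridge are connected by non-bridges avoiding it. -/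
lemma nonbridge_conn (Gconn : ∀ u v, G.Conn Set.univ u v) {e : G.E}
    (he : ¬ G.IsBridge e) :
    G.Conn ({g | ¬ G.IsBridge g} \ {e}) (G.src e) (G.tgt e) := by
  have h0 : G.Conn (Set.univ \ {e}) (G.src e) (G.tgt e) := not_not.1 he
  have := conn_purge Gconn (Set.univ \ {e}) h0 (fun f hbf =>
    conn_of_edge (show e ∈ Set.univ \ {f} from
      ⟨Set.mem_univ e, fun hh => he (Set.mem_singleton_iff.1 hh ▸ hbf)⟩))
  refine this.mono (fun g hg => ?_)
  exact show g ∈ {g | ¬ G.IsBridge g} \ {e} from ⟨hg.2, hg.1.2⟩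

/-- A nontrivial walk must end with an edge incident to its endpoint. -/
lemma exists_edge_at {F : Set G.E} {u w : G.V} (h : G.Conn F u w) (hne : u ≠ w) :
    ∃ e ∈ F, G.src e = w ∨ G.tgt e = w := by
  induction h with
  | refl => exact absurd rfl hne
  | tail _ hs _ =>
    obtain ⟨e, he, hor⟩ := hs
    rcases hor with ⟨h1, h2⟩ | ⟨h1, h2⟩
    · exact ⟨e, he, Or.inr h2⟩
    · exact ⟨e, he, Or.inl h1⟩

end Aux3

end MDigraph
namespace MDigraph

section Aux4

variable {G : MDigraph}

/-- The non-bridge edges. -/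
def nonBridges (G : MDigraph) : Set G.E := {e | ¬ G.IsBridge e}

/-- The 2-edge-connected class of a vertex. -/
def cls (G : MDigraph) (v : G.V) : Set G.V := {u | G.Conn G.nonBridges u v}

lemma mem_cls_self (v : G.V) : v ∈ G.cls v := conn_refl _ _

lemma cls_step {F : Set G.E} (hF : F ⊆ G.nonBridges) {v : G.V} :
    ∀ e ∈ F, ((G.src e ∈ G.cls v) ↔ (G.tgt e ∈ G.cls v)) := by
  intro e he
  have hst : G.Conn G.nonBridges (G.src e) (G.tgt e) := conn_of_edge (hF he)
  exact ⟨fun h => hst.symm.trans h, fun h => hst.trans h⟩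

/-- The blob containing a given vertex. -/
def blobOf (G : MDigraph) (v : G.V) : Subgraph G where
  verts := G.cls v
  edges := {e ∈ G.nonBridges | G.src e ∈ G.cls v ∧ G.tgt e ∈ G.cls v}
  src_mem := fun _ he => he.2.1
  tgt_mem := fun _ he => he.2.2

lemma blobOf_connected (v : G.V) : (G.blobOf v).IsConnected := by
  refine ⟨⟨v, mem_cls_self v⟩, fun u hu w hw => ?_⟩
  have h1 := (conn_upgrade (cls_step (le_refl G.nonBridges)) hu hu).1
  have h2 := (conn_upgrade (cls_step (le_refl G.nonBridges)) hw hw).1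
  exact h1.trans h2.symm

lemma blobOf_noCut (Gconn : ∀ u v, G.Conn Set.univ u v) (v : G.V) :
    ∀ e, ¬ (G.blobOf v).IsCutEdge e := by
  intro e hcut
  rw [isCutEdge_iff] at hcut
  obtain ⟨he, hnc⟩ := hcut
  obtain ⟨heNB, hes, het⟩ := he
  apply hnc
  have h0 := nonbridge_conn Gconn heNB
  have h1 := (conn_upgrade (P := (· ∈ G.cls v))
    (fun g hg => cls_step Set.diff_subset g hg) h0 hes).1
  refine h1.mono (fun g hg => ?_)
  obtain ⟨⟨hg1, hg2⟩, hg3, hg4⟩ := hg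
  exact ⟨⟨⟨hg1, hg3, hg4⟩, hg2⟩, hg3, hg4⟩

/-- Edges of a subgraph with no cut edges are non-bridges. -/
lemma edges_nonbridge {B : Subgraph G} (hnc : ∀ e, ¬ B.IsCutEdge e) :
    B.edges ⊆ G.nonBridges := by
  intro g hg
  have h := hnc g
  rw [isCutEdge_iff] at h
  push_neg at h
  have hconn := h hg
  intro hb
  exact hb (hconn.mono (fun x hx => show x ∈ Set.univ \ {g} from ⟨Set.mem_univ x, hx.1.2⟩))

/-- A connected subgraph with no cut edges lies in the blob of any of its vertices. -/
lemma le_blobOf {B : Subgraph G} (hBc : B.IsConnected) (hnc : ∀ e, ¬ B.IsCutEdge e)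
    {v : G.V} (hv : v ∈ B.verts) : B.le (G.blobOf v) := by
  have hsub := edges_nonbridge hnc
  have hverts : B.verts ⊆ G.cls v := by
    intro u hu
    exact (hBc.2 u hu v hv).mono hsub
  refine ⟨hverts, fun g hg => ?_⟩
  exact ⟨hsub hg, hverts (B.src_mem g hg), hverts (B.tgt_mem g hg)⟩

lemma blobOf_isBlob (Gconn : ∀ u v, G.Conn Set.univ u v) (v : G.V) :
    IsBlobIn (top G) (G.blobOf v) := by
  refine ⟨⟨Set.subset_univ _, Set.subset_univ _⟩, blobOf_connected v,
    blobOf_noCut Gconn v, fun B' _ hconn hnc hle => ?_⟩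
  exact le_blobOf hconn hnc (hle.1 (mem_cls_self v))

lemma blob_le_blobOf {B : Subgraph G} (hB : IsBlobIn (top G) B) {v : G.V}
    (hv : v ∈ B.verts) : B.le (G.blobOf v) :=
  le_blobOf hB.2.1 hB.2.2.1 hv

lemma blobOf_le_blob (Gconn : ∀ u v, G.Conn Set.univ u v) {B : Subgraph G}
    (hB : IsBlobIn (top G) B) {v : G.V} (hv : v ∈ B.verts) : (G.blobOf v).le B := by
  have h := blobOf_isBlob Gconn v
  exact hB.2.2.2 _ h.1 h.2.1 h.2.2.1 (blob_le_blobOf hB hv)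

/-- A non-bridge cannot leave a blob. -/
lemma nonbridge_boundary (Gconn : ∀ u v, G.Conn Set.univ u v) {B : Subgraph G}
    (hB : IsBlobIn (top G) B) {g : G.E} (hg : ¬ G.IsBridge g) :
    (G.src g ∈ B.verts ↔ G.tgt g ∈ B.verts) := by
  constructor
  · intro hs
    have : G.tgt g ∈ G.cls (G.src g) := (conn_of_edge (show g ∈ G.nonBridges from hg)).symm
    exact (blobOf_le_blob Gconn hB hs).1 this
  · intro ht
    have : G.src g ∈ G.cls (G.tgt g) := conn_of_edge (show g ∈ G.nonBridges from hg)
    exact (blobOf_le_blob Gconn hB ht).1 this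

end Aux4

end MDigraph
namespace MDigraph

section Aux5

variable {G : MDigraph}

/-- Walk decomposition at the boundary of a vertex set `C`. -/
lemma conn_decompose {C : Set G.V} {S : Set G.E} {u v : G.V} (h : G.Conn S u v)
    (hu : u ∉ C) :
    (v ∉ C ∧ G.Conn {e ∈ S | G.src e ∉ C ∧ G.tgt e ∉ C} u v) ∨
    (∃ w, w ∈ C ∧ G.Conn S w v ∧ ∃ e ∈ S,
      ((G.tgt e = w ∧ G.src e ∉ C ∧
          G.Conn {e ∈ S | G.src e ∉ C ∧ G.tgt e ∉ C} u (G.src e)) ∨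
       (G.src e = w ∧ G.tgt e ∉ C ∧
          G.Conn {e ∈ S | G.src e ∉ C ∧ G.tgt e ∉ C} u (G.tgt e)))) := by
  induction h with
  | refl => exact Or.inl ⟨hu, conn_refl _ _⟩
  | @tail x z _ hs ih =>
    obtain ⟨e, heS, hor⟩ := hs
    rcases ih with ⟨hx, hc⟩ | ⟨w, hw, hwv, hcross⟩
    · by_cases hz : z ∈ C
      · refine Or.inr ⟨z, hz, conn_refl _ _, e, heS, ?_⟩
        rcases hor with ⟨h1, h2⟩ | ⟨h1, h2⟩
        · exact Or.inl ⟨h2, by rw [h1]; exact hx, by rwa [h1]⟩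
        · exact Or.inr ⟨h1, by rw [h2]; exact hx, by rwa [h2]⟩
      · refine Or.inl ⟨hz, hc.tail ⟨e, ?_, hor⟩⟩
        rcases hor with ⟨h1, h2⟩ | ⟨h1, h2⟩
        · exact ⟨heS, h1.symm ▸ hx, h2.symm ▸ hz⟩
        · exact ⟨heS, h1.symm ▸ hz, h2.symm ▸ hx⟩
    · exact Or.inr ⟨w, hw, hwv.tail ⟨e, heS, hor⟩, hcross⟩

/-- If a vertex has four distinct incident edges, its degree is at least 4. -/
lemma four_le_degree {v : G.V} {e1 e2 e3 e4 : G.E}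
    (h1 : G.src e1 = v ∨ G.tgt e1 = v) (h2 : G.src e2 = v ∨ G.tgt e2 = v)
    (h3 : G.src e3 = v ∨ G.tgt e3 = v) (h4 : G.src e4 = v ∨ G.tgt e4 = v)
    (h12 : e1 ≠ e2) (h13 : e1 ≠ e3) (h14 : e1 ≠ e4)
    (h23 : e2 ≠ e3) (h24 : e2 ≠ e4) (h34 : e3 ≠ e4) :
    4 ≤ G.inDeg v + G.outDeg v := by
  classical
  let T := ({e : G.E // G.tgt e = v} ⊕ {e : G.E // G.src e = v})
  let toSum : ∀ (e : G.E), (G.src e = v ∨ G.tgt e = v) → T := fun e he =>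
    if h' : G.tgt e = v then Sum.inl ⟨e, h'⟩ else Sum.inr ⟨e, he.resolve_right h'⟩
  have hval : ∀ e he, Sum.elim Subtype.val Subtype.val (toSum e he) = e := by
    intro e he
    by_cases h' : G.tgt e = v <;> simp [toSum, h']
  have hne : ∀ {a b : G.E} (ha : G.src a = v ∨ G.tgt a = v)
      (hb : G.src b = v ∨ G.tgt b = v), a ≠ b → toSum a ha ≠ toSum b hb := by
    intro a b ha hb hab h
    have := congrArg (Sum.elim Subtype.val Subtype.val) h
    rw [hval a ha, hval b hb] at this
    exact hab this
  have hcard : ({toSum e1 h1, toSum e2 h2, toSum e3 h3, toSum e4 h4} : Set T).ncard = 4 := by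
    rw [Set.ncard_insert_of_notMem (by
        simp [hne h1 h2 h12, hne h1 h3 h13, hne h1 h4 h14]) (Set.toFinite _),
      Set.ncard_insert_of_notMem (by
        simp [hne h2 h3 h23, hne h2 h4 h24]) (Set.toFinite _),
      Set.ncard_pair (hne h3 h4 h34)]
  have hle : ({toSum e1 h1, toSum e2 h2, toSum e3 h3, toSum e4 h4} : Set T).ncard ≤
      Nat.card T := by
    rw [← Set.ncard_univ]
    exact Set.ncard_le_ncard (Set.subset_univ _) (Set.toFinite _)
  rw [hcard] at hle
  calc (4 : ℕ) ≤ Nat.card T := hle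
    _ = G.inDeg v + G.outDeg v := by rw [Nat.card_sum]; rfl

/-- If `w` lies on the opposite side of the bridge `f` from `v`, then
opposite-`v` and same-side-`w` coincide. -/
lemma opp_iff_of_bridge (Gconn : ∀ u v, G.Conn Set.univ u v) {f : G.E}
    (hf : G.IsBridge f) {v w : G.V} (hvw : ¬ G.Conn (Set.univ \ {f}) v w) (x : G.V) :
    (¬ G.Conn (Set.univ \ {f}) v x ↔ G.Conn (Set.univ \ {f}) w x) := by
  constructor
  · intro hx
    rcases side_cover Gconn f v with hv | hv <;>
      rcases side_cover Gconn f w with hw | hw <;>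
      rcases side_cover Gconn f x with hxx | hxx <;>
      first
        | exact hw.trans hxx.symm
        | exact absurd (hv.trans hw.symm) hvw
        | exact absurd (hv.trans hxx.symm) hx
  · intro hx hvx
    exact hvw (hvx.trans hx.symm)

/-- Opposite-side counting function for four marked vertices. -/
noncomputable def kcount (G : MDigraph) (l : Fin 4 → G.V) (f : G.E) (v : G.V) : ℕ :=
  {i : Fin 4 | ¬ G.Conn (Set.univ \ {f}) v (l i)}.ncard

/-- Total opposite-side count over all bridges. -/
noncomputable def mu (G : MDigraph) (l : Fin 4 → G.V) (v : G.V) : ℕ :=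
  {p : G.E × Fin 4 | G.IsBridge p.1 ∧ ¬ G.Conn (Set.univ \ {p.1}) v (l p.2)}.ncard

lemma kcount_add_opp (Gconn : ∀ u v, G.Conn Set.univ u v) {f : G.E}
    (hf : G.IsBridge f) {v w : G.V} (hvw : ¬ G.Conn (Set.univ \ {f}) v w)
    (l : Fin 4 → G.V) : kcount G l f v + kcount G l f w = 4 := by
  have hwv : ¬ G.Conn (Set.univ \ {f}) w v := fun h => hvw h.symm
  have hcompl : {i : Fin 4 | ¬ G.Conn (Set.univ \ {f}) w (l i)} =
      {i : Fin 4 | ¬ G.Conn (Set.univ \ {f}) v (l i)}ᶜ := by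
    ext i
    simp only [Set.mem_setOf_eq, Set.mem_compl_iff, not_not]
    exact opp_iff_of_bridge Gconn hf hwv (l i)
  rw [kcount, kcount, hcompl, Set.ncard_add_ncard_compl]
  simp

end Aux5

end MDigraph
namespace MDigraph

section Aux6

variable {G : MDigraph}

/-- Nesting: if `g` also separates `v` from the far endpoint `ct` of the bridge `f`,
then everything `f`-opposite to `v` is also `g`-opposite to `v`. -/
lemma opp_nest (Gconn : ∀ u v, G.Conn Set.univ u v) {f g : G.E}
    (hg : G.IsBridge g) {v ct : G.V}
    (hctf : ¬ G.Conn (Set.univ \ {f}) v ct) (hctg : ¬ G.Conn (Set.univ \ {g}) v ct)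
    (hend : ct = G.src f ∨ ct = G.tgt f)
    {x : G.V} (hx : ¬ G.Conn (Set.univ \ {f}) v x) : ¬ G.Conn (Set.univ \ {g}) v x := by
  by_cases hfg : f = g
  · subst hfg; exact hx
  have hfmem : f ∈ Set.univ \ {g} :=
    ⟨Set.mem_univ f, fun h => hfg (Set.mem_singleton_iff.1 h)⟩
  have hfconn : G.Conn (Set.univ \ {g}) (G.src f) (G.tgt f) := conn_of_edge hfmem
  intro hSS
  have hP : ∀ e ∈ Set.univ \ {g},
      (G.Conn (Set.univ \ {g}) v (G.src e) ↔ G.Conn (Set.univ \ {g}) v (G.tgt e)) := by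
    intro e he
    have hc := conn_of_edge he
    exact ⟨fun h => h.trans hc, fun h => h.trans hc.symm⟩
  have hup := (conn_upgrade hP hSS (conn_refl _ _)).1
  have hsub : {e ∈ Set.univ \ {g} | G.Conn (Set.univ \ {g}) v (G.src e) ∧
      G.Conn (Set.univ \ {g}) v (G.tgt e)} ⊆ Set.univ \ {f} := by
    intro e he
    refine ⟨Set.mem_univ e, fun hef => ?_⟩
    have hef' : e = f := Set.mem_singleton_iff.1 hef
    subst hef'
    rcases hend with h | h
    · exact hctg (h ▸ he.2.1)
    · exact hctg (h ▸ he.2.2)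
  exact hx (hup.mono hsub)

lemma kcount_ge_two {l : Fin 4 → G.V} {g : G.E} {v : G.V} {i j : Fin 4}
    (hij : i ≠ j) (hi : ¬ G.Conn (Set.univ \ {g}) v (l i))
    (hj : ¬ G.Conn (Set.univ \ {g}) v (l j)) : 2 ≤ kcount G l g v := by
  rw [← Set.ncard_pair hij]
  exact Set.ncard_le_ncard (by
    intro t ht
    rcases ht with rfl | rfl
    · exact hi
    · exact hj) (Set.toFinite _)

/-- If some bridge has at least three of the marked vertices opposite `v`,
then `v` does not minimize `mu`. -/
lemma mu_decrease (Gconn : ∀ u v, G.Conn Set.univ u v) (l : Fin 4 → G.V) {f : G.E}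
    (hf : G.IsBridge f) {v : G.V} (hk : 3 ≤ kcount G l f v) :
    ∃ w, mu G l w < mu G l v := by
  obtain ⟨ct, hend, hctf⟩ : ∃ ct, (ct = G.src f ∨ ct = G.tgt f) ∧
      ¬ G.Conn (Set.univ \ {f}) v ct := by
    rcases side_cover Gconn f v with h | h
    · exact ⟨G.tgt f, Or.inr rfl, fun hc => hf (h.symm.trans hc)⟩
    · exact ⟨G.src f, Or.inl rfl, fun hc => hf (hc.symm.trans h)⟩
  refine ⟨ct, ?_⟩
  set D := {g : G.E | G.IsBridge g ∧ ¬ G.Conn (Set.univ \ {g}) v ct} with hD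
  have hfD : f ∈ D := ⟨hf, hctf⟩
  have hDk : ∀ g ∈ D, {i : Fin 4 | ¬ G.Conn (Set.univ \ {f}) v (l i)} ⊆
      {i : Fin 4 | ¬ G.Conn (Set.univ \ {g}) v (l i)} :=
    fun g hgD i hi => opp_nest Gconn hgD.1 hctf hgD.2 hend hi
  have hDge : ∀ g ∈ D, 3 ≤ kcount G l g v :=
    fun g hgD => le_trans hk (Set.ncard_le_ncard (hDk g hgD) (Set.toFinite _))
  have hDle : ∀ g ∈ D, kcount G l g ct ≤ 1 := by
    intro g hgD
    have h1 := kcount_add_opp Gconn hgD.1 hgD.2 l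
    have h2 := hDge g hgD
    omega
  -- split mu into the D-part and the rest
  set A : G.V → Set (G.E × Fin 4) := fun w =>
    {p | (G.IsBridge p.1 ∧ ¬ G.Conn (Set.univ \ {p.1}) w (l p.2)) ∧ p.1 ∈ D} with hA
  set B : G.V → Set (G.E × Fin 4) := fun w =>
    {p | (G.IsBridge p.1 ∧ ¬ G.Conn (Set.univ \ {p.1}) w (l p.2)) ∧ p.1 ∉ D} with hB
  have hsplit : ∀ w, mu G l w = (A w).ncard + (B w).ncard := by
    intro w
    rw [mu, ← Set.ncard_union_eq (by
      rw [Set.disjoint_left]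
      intro p hp hp'
      exact hp'.2 hp.2) (Set.toFinite _) (Set.toFinite _)]
    congr 1
    ext p
    simp only [hA, hB, Set.mem_setOf_eq, Set.mem_union]
    tauto
  have hBeq : B ct = B v := by
    ext ⟨g, i⟩
    simp only [hB, Set.mem_setOf_eq]
    constructor
    · rintro ⟨⟨hbr, hopp⟩, hnD⟩
      have hSS : G.Conn (Set.univ \ {g}) v ct := by
        by_contra hno
        exact hnD ⟨hbr, hno⟩
      exact ⟨⟨hbr, fun hc => hopp (hSS.symm.trans hc)⟩, hnD⟩
    · rintro ⟨⟨hbr, hopp⟩, hnD⟩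
      have hSS : G.Conn (Set.univ \ {g}) v ct := by
        by_contra hno
        exact hnD ⟨hbr, hno⟩
      exact ⟨⟨hbr, fun hc => hopp (hSS.trans hc)⟩, hnD⟩
  have hAct : (A ct).ncard ≤ D.ncard := by
    refine Set.ncard_le_ncard_of_injOn Prod.fst (fun p hp => hp.2) ?_ (Set.toFinite _)
    intro p hp p' hp' hfst
    have hle1 := hDle p.1 hp.2
    have h1 : p.2 ∈ {i : Fin 4 | ¬ G.Conn (Set.univ \ {p.1}) ct (l i)} := hp.1.2
    have h2 : p'.2 ∈ {i : Fin 4 | ¬ G.Conn (Set.univ \ {p.1}) ct (l i)} := by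
      have := hp'.1.2
      rw [← hfst] at this
      exact this
    have := (Set.ncard_le_one (Set.toFinite _)).mp hle1 _ h1 _ h2
    exact Prod.ext hfst this
  have hAv : D.ncard + 1 ≤ (A v).ncard := by
    obtain ⟨i1, i2, hi1, hi2, hne⟩ :
        ∃ i1 i2, i1 ∈ {i : Fin 4 | ¬ G.Conn (Set.univ \ {f}) v (l i)} ∧
          i2 ∈ {i : Fin 4 | ¬ G.Conn (Set.univ \ {f}) v (l i)} ∧ i1 ≠ i2 := by
      have hk' := hk
      simp only [kcount] at hk'
      have : 1 < {i : Fin 4 | ¬ G.Conn (Set.univ \ {f}) v (l i)}.ncard := by omega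
      exact (Set.one_lt_ncard_iff (Set.toFinite _)).mp this
    set S : Set (G.E × Fin 4) := insert (f, i2) ((fun g => (g, i1)) '' D) with hS
    have hSsub : S ⊆ A v := by
      intro p hp
      rcases hp with rfl | ⟨g, hg, rfl⟩
      · exact ⟨⟨hf, hi2⟩, hfD⟩
      · exact ⟨⟨hg.1, hDk g hg hi1⟩, hg⟩
    have hScard : S.ncard = D.ncard + 1 := by
      rw [hS, Set.ncard_insert_of_notMem (by
          rintro ⟨g, hg, hgeq⟩
          exact hne (Prod.ext_iff.1 hgeq).2) (Set.toFinite _),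
        Set.ncard_image_of_injOn (fun x hx y hy hxy => (Prod.ext_iff.1 hxy).1)]
    calc D.ncard + 1 = S.ncard := hScard.symm
      _ ≤ (A v).ncard := Set.ncard_le_ncard hSsub (Set.toFinite _)
  have h1 := hsplit ct
  have h2 := hsplit v
  rw [hBeq] at h1
  omega

/-- `mu` attains a minimum. -/
lemma exists_mu_min (l : Fin 4 → G.V) (v0 : G.V) :
    ∃ v, ∀ u, mu G l v ≤ mu G l u := by
  have hne : (Set.range (mu G l)).Nonempty := ⟨_, v0, rfl⟩
  obtain ⟨v, hv⟩ := Nat.sInf_mem hne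
  exact ⟨v, fun u => le_of_eq_of_le hv (Nat.sInf_le ⟨u, rfl⟩)⟩

end Aux6

end MDigraph
namespace MDigraph

section Aux7

variable {G : MDigraph}

lemma cls_eq_of_mem {v u : G.V} (hu : u ∈ G.cls v) : G.cls u = G.cls v := by
  ext w
  exact ⟨fun h => h.trans hu, fun h => h.trans hu.symm⟩

lemma bridge_of_cls_boundary_tgt {v : G.V} {e : G.E} (h1 : G.tgt e ∈ G.cls v)
    (h2 : G.src e ∉ G.cls v) : G.IsBridge e := by
  by_contra hnb
  have : G.src e ∈ G.cls (G.tgt e) := conn_of_edge (show e ∈ G.nonBridges from hnb)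
  rw [cls_eq_of_mem h1] at this
  exact h2 this

lemma bridge_of_cls_boundary_src {v : G.V} {e : G.E} (h1 : G.src e ∈ G.cls v)
    (h2 : G.tgt e ∉ G.cls v) : G.IsBridge e := by
  by_contra hnb
  have : G.tgt e ∈ G.cls (G.src e) :=
    (conn_of_edge (show e ∈ G.nonBridges from hnb)).symm
  rw [cls_eq_of_mem h1] at this
  exact h2 this

end Aux7

end MDigraph

namespace PhyloNetwork

open MDigraph

section Aux8

variable {X : Type} (N : PhyloNetwork X)

lemma no_loop (e : N.toMDigraph.E) : N.toMDigraph.src e ≠ N.toMDigraph.tgt e := by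
  intro h
  exact N.acyclic (N.toMDigraph.src e)
    (Relation.TransGen.single ⟨e, Set.mem_univ e, rfl, h.symm⟩)

lemma degree_le_three (v : N.toMDigraph.V) :
    N.toMDigraph.inDeg v + N.toMDigraph.outDeg v ≤ 3 := by
  by_cases hr : v = N.root
  · subst hr; rw [N.root_in, N.root_out]; omega
  · by_cases hl : ∃ x, v = N.leaf x
    · obtain ⟨x, rfl⟩ := hl; rw [N.leaf_in x, N.leaf_out x]; omega
    · push_neg at hl
      rcases N.internal v hr hl with ⟨hh1, hh2⟩ | ⟨hh1, hh2⟩ <;> rw [hh1, hh2] <;> omega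

lemma no_src_leaf (x : X) (e : N.toMDigraph.E) : N.toMDigraph.src e ≠ N.leaf x := by
  intro h
  have h0 := N.leaf_out x
  simp only [MDigraph.outDeg] at h0
  rw [Nat.card_eq_zero] at h0
  rcases h0 with h0 | h0
  · exact h0.false ⟨e, h⟩
  · exact absurd h0 (not_infinite_iff_finite.2 Subtype.finite)

lemma leaf_in_edge (x : X) : ∃ e, N.toMDigraph.tgt e = N.leaf x ∧
    ∀ e', N.toMDigraph.tgt e' = N.leaf x → e' = e := by
  have h1 := N.leaf_in x
  simp only [MDigraph.inDeg] at h1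
  rw [Nat.card_eq_one_iff_unique] at h1
  obtain ⟨hsub, ⟨⟨e, he⟩⟩⟩ := h1
  refine ⟨e, he, fun e' he' => ?_⟩
  exact congrArg Subtype.val (@Subsingleton.elim _ hsub ⟨e', he'⟩ ⟨e, he⟩)

lemma leaf_side {x : X} {e : N.toMDigraph.E} (he : N.toMDigraph.tgt e = N.leaf x)
    {z : N.toMDigraph.V} (hz : N.toMDigraph.Conn (Set.univ \ {e}) z (N.leaf x)) :
    z = N.leaf x := by
  by_contra hne
  obtain ⟨g, hg, hgi⟩ := exists_edge_at hz hne
  rcases hgi with h | h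
  · exact no_src_leaf N x g h
  · obtain ⟨e0, he0, hu⟩ := leaf_in_edge N x
    have h1 : g = e0 := hu g h
    have h2 : e = e0 := hu e he
    exact hg.2 (Set.mem_singleton_iff.2 (h1.trans h2.symm))

lemma leaf_edge_bridge {x : X} {e : N.toMDigraph.E}
    (he : N.toMDigraph.tgt e = N.leaf x) : N.toMDigraph.IsBridge e := by
  intro hconn
  rw [he] at hconn
  have := leaf_side N he hconn
  exact no_loop N e (this.trans he.symm)

lemma cls_leaf (x : X) : N.toMDigraph.cls (N.leaf x) = {N.leaf x} := by
  ext u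
  constructor
  · intro hu
    by_contra hne
    obtain ⟨g, hg, hgi⟩ := exists_edge_at hu hne
    rcases hgi with h | h
    · exact no_src_leaf N x g h
    · exact hg (leaf_edge_bridge N h)
  · rintro rfl
    exact mem_cls_self _

/-- In a binary network, at most one bridge is incident to each vertex of a
nontrivial blob. -/
lemma bridge_unique_at {v w : N.toMDigraph.V} (hw : w ∈ N.toMDigraph.cls v)
    (hnt : ∃ u ∈ N.toMDigraph.cls v, u ≠ w) {f1 f2 : N.toMDigraph.E}
    (hb1 : N.toMDigraph.IsBridge f1) (hb2 : N.toMDigraph.IsBridge f2)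
    (hi1 : N.toMDigraph.src f1 = w ∨ N.toMDigraph.tgt f1 = w)
    (hi2 : N.toMDigraph.src f2 = w ∨ N.toMDigraph.tgt f2 = w) : f1 = f2 := by
  by_contra hne
  obtain ⟨u, hu, hune⟩ := hnt
  have hconn : N.toMDigraph.Conn N.toMDigraph.nonBridges u w := hu.trans hw.symm
  obtain ⟨g1, hg1NC, hg1i⟩ := exists_edge_at hconn hune
  have hg1nb : ¬ N.toMDigraph.IsBridge g1 := hg1NC
  obtain ⟨g2, hg2, hg2i⟩ : ∃ g2, (g2 ∈ N.toMDigraph.nonBridges ∧ g2 ≠ g1) ∧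
      (N.toMDigraph.src g2 = w ∨ N.toMDigraph.tgt g2 = w) := by
    have hcc := nonbridge_conn N.conn hg1nb
    rcases hg1i with hsg | htg
    · have hwalk : N.toMDigraph.Conn (N.toMDigraph.nonBridges \ {g1})
          (N.toMDigraph.tgt g1) w := by
        rw [← hsg]; exact hcc.symm
      have hne' : N.toMDigraph.tgt g1 ≠ w := by
        rw [← hsg]; exact fun h => no_loop N g1 h.symm
      obtain ⟨g2, hg2m, hg2i⟩ := exists_edge_at hwalk hne'
      exact ⟨g2, ⟨hg2m.1, fun h => hg2m.2 (Set.mem_singleton_iff.2 h)⟩, hg2i⟩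
    · have hwalk : N.toMDigraph.Conn (N.toMDigraph.nonBridges \ {g1})
          (N.toMDigraph.src g1) w := by
        rw [← htg]; exact hcc
      have hne' : N.toMDigraph.src g1 ≠ w := by
        rw [← htg]; exact no_loop N g1
      obtain ⟨g2, hg2m, hg2i⟩ := exists_edge_at hwalk hne'
      exact ⟨g2, ⟨hg2m.1, fun h => hg2m.2 (Set.mem_singleton_iff.2 h)⟩, hg2i⟩
  have hd := four_le_degree hi1 hi2 hg1i hg2i hne
    (fun h => hg1nb (h ▸ hb1)) (fun h => hg2.1 (h ▸ hb1))
    (fun h => hg1nb (h ▸ hb2)) (fun h => hg2.1 (h ▸ hb2))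
    (fun h => hg2.2 h.symm)
  have := degree_le_three N w
  omega

end Aux8

end PhyloNetwork
namespace MDigraph

section Aux9

variable {G : MDigraph}

lemma three_le_ncard {α : Type*} {s : Set α} (hs : s.Finite) {x y z : α} (hxy : x ≠ y)
    (hxz : x ≠ z) (hyz : y ≠ z) (hx : x ∈ s) (hy : y ∈ s) (hz : z ∈ s) : 3 ≤ s.ncard := by
  have hsub : ({x, y, z} : Set α) ⊆ s := by
    intro t ht
    rcases ht with rfl | rfl | rfl
    · exact hx
    · exact hy
    · exact hz
  have h3 : ({x, y, z} : Set α).ncard = 3 := by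
    rw [Set.ncard_insert_of_notMem (by simp [hxy, hxz])
      ((Set.finite_singleton z).insert y), Set.ncard_pair hyz]
  rw [← h3]
  exact Set.ncard_le_ncard hsub hs

lemma same_side_of_opp (Gconn : ∀ u v, G.Conn Set.univ u v) {f : G.E}
    {v x y : G.V} (hx : ¬ G.Conn (Set.univ \ {f}) v x)
    (hy : ¬ G.Conn (Set.univ \ {f}) v y) : G.Conn (Set.univ \ {f}) x y := by
  rcases side_cover Gconn f v with hv | hv <;>
    rcases side_cover Gconn f x with hxs | hxs <;>
    rcases side_cover Gconn f y with hys | hys <;>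
    first
      | exact hxs.trans hys.symm
      | exact absurd (hv.trans hxs.symm) (fun h => hx h)
      | exact absurd (hv.trans hys.symm) (fun h => hy h)

end Aux9

end MDigraph

namespace PhyloNetwork

open MDigraph

section Aux10

variable {X : Type} (N : PhyloNetwork X)

/-- (1) implies the non-existence of a cut-edge separation of the quartet. -/
lemma not_cutsep_of_determines {B : Subgraph N.toMDigraph}
    (hB : IsBlobIn (top N.toMDigraph) B) {Q : Set X}
    (hdet : DeterminesIn (top N.toMDigraph) B N.leaf Q)
    {p q r s : X} (hp : p ∈ Q) (hq : q ∈ Q) (hr : r ∈ Q) (hs : s ∈ Q)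
    (hpq : p ≠ q) (hrs : r ≠ s) :
    ¬ CutSep (top N.toMDigraph) N.leaf p q r s := by
  rintro ⟨f, hcut, hconnpq, hconnrs, hnpr⟩
  have hbr : N.toMDigraph.IsBridge f := (top_isCutEdge_iff f).1 hcut
  obtain ⟨v0, hv0⟩ := hB.2.1.1
  have hBedges := edges_nonbridge hB.2.2.1
  have hconnpq' : N.toMDigraph.Conn (Set.univ \ {f}) (N.leaf p) (N.leaf q) := hconnpq
  have hconnrs' : N.toMDigraph.Conn (Set.univ \ {f}) (N.leaf r) (N.leaf s) := hconnrs
  have hnpr' : ¬ N.toMDigraph.Conn (Set.univ \ {f}) (N.leaf p) (N.leaf r) := hnpr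
  have key : ∀ x y : X, x ∈ Q → y ∈ Q → x ≠ y →
      N.toMDigraph.Conn (Set.univ \ {f}) (N.leaf x) (N.leaf y) →
      ¬ N.toMDigraph.Conn (Set.univ \ {f}) v0 (N.leaf x) → False := by
    intro x y hx hy hxy hconn hv0x
    apply hdet x hx y hy hxy
    have hP : ∀ e ∈ Set.univ \ {f},
        (N.toMDigraph.Conn (Set.univ \ {f}) (N.leaf x) (N.toMDigraph.src e) ↔
         N.toMDigraph.Conn (Set.univ \ {f}) (N.leaf x) (N.toMDigraph.tgt e)) := by
      intro e he
      have hc := conn_of_edge he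
      exact ⟨fun h => h.trans hc, fun h => h.trans hc.symm⟩
    have hup := (conn_upgrade hP hconn (conn_refl _ _)).1
    refine hup.mono ?_
    rintro e ⟨hemem, hesrc, hetgt⟩
    have hnb : ∀ z, N.toMDigraph.Conn (Set.univ \ {f}) (N.leaf x) z → z ∉ B.verts := by
      intro z hz hzB
      have hzv0 : N.toMDigraph.Conn (Set.univ \ {f}) z v0 :=
        (hB.2.1.2 z hzB v0 hv0).mono (fun g hg =>
          show g ∈ Set.univ \ {f} from
            ⟨Set.mem_univ g, fun hh => (hBedges hg) (Set.mem_singleton_iff.1 hh ▸ hbr)⟩)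
      exact hv0x ((hz.trans hzv0).symm)
    refine ⟨Set.mem_univ e, ?_⟩
    rintro ⟨_, hxor⟩
    rcases hxor with ⟨hsB, _⟩ | ⟨htB, _⟩
    · exact hnb _ hesrc hsB
    · exact hnb _ hetgt htB
  by_cases hv0p : N.toMDigraph.Conn (Set.univ \ {f}) v0 (N.leaf p)
  · have hv0r : ¬ N.toMDigraph.Conn (Set.univ \ {f}) v0 (N.leaf r) :=
      fun h => hnpr' (hv0p.symm.trans h)
    exact key r s hr hs hrs hconnrs' hv0r
  · exact key p q hp hq hpq hconnpq' hv0p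

/-- (2) implies (1): a blob separating the quartet determines it. -/
lemma determines_of_blob_sep {B : Subgraph N.toMDigraph}
    (hB : IsBlobIn (top N.toMDigraph) B) {Q : Set X}
    (hQ : ∃ x y : X, x ∈ Q ∧ y ∈ Q ∧ x ≠ y)
    (hsep : ∀ p ∈ Q, ∀ q ∈ Q, p ≠ q →
      ¬ N.toMDigraph.Conn {e | e ∉ B.edges} (N.leaf p) (N.leaf q)) :
    DeterminesIn (top N.toMDigraph) B N.leaf Q := by
  intro p hp q hq hpq hconn
  have hleaf_not : ∀ x ∈ Q, N.leaf x ∉ B.verts := by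
    intro x hx hxB
    have hBle := blob_le_blobOf hB hxB
    have hempty : ∀ e, e ∉ B.edges := by
      intro e he
      have h2 : N.toMDigraph.src e ∈ N.toMDigraph.cls (N.leaf x) := (hBle.2 he).2.1
      rw [cls_leaf] at h2
      exact no_src_leaf N x e h2
    obtain ⟨y, z, hy, hz, hyz⟩ := hQ
    exact hsep y hy z hz hyz ((N.conn _ _).mono (fun e _ => hempty e))
  have hP : ∀ e ∈ {e | e ∈ (top N.toMDigraph).edges ∧
      ¬ IncidentCut (top N.toMDigraph) B e},
      ((N.toMDigraph.src e ∉ B.verts) ↔ (N.toMDigraph.tgt e ∉ B.verts)) := by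
    intro e he
    by_cases hbr : N.toMDigraph.IsBridge e
    · have hiff : (N.toMDigraph.src e ∈ B.verts) ↔ (N.toMDigraph.tgt e ∈ B.verts) := by
        by_contra hniff
        exact he.2 ⟨(top_isCutEdge_iff e).2 hbr, (xor_iff_not_iff _ _).2 hniff⟩
      exact not_congr hiff
    · exact not_congr (nonbridge_boundary N.conn hB hbr)
  have hup := (conn_upgrade (P := fun z => z ∉ B.verts) hP hconn (hleaf_not p hp)).1
  apply hsep p hp q hq hpq
  refine hup.mono ?_
  rintro e ⟨_, hesrc, _⟩
  exact fun heB => hesrc (B.src_mem e heB)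

end Aux10

end PhyloNetwork
namespace PhyloNetwork

open MDigraph

section Aux11

variable {X : Type} (N : PhyloNetwork X)

lemma exists_blob_sep (a b c d : X)
    (hab : a ≠ b) (hac : a ≠ c) (had : a ≠ d) (hbc : b ≠ c) (hbd : b ≠ d) (hcd : c ≠ d)
    (hno1 : ¬ CutSep (top N.toMDigraph) N.leaf a b c d)
    (hno2 : ¬ CutSep (top N.toMDigraph) N.leaf a c b d)
    (hno3 : ¬ CutSep (top N.toMDigraph) N.leaf a d b c) :
    ∃ B : Subgraph N.toMDigraph, IsBlobIn (top N.toMDigraph) B ∧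
      ∀ p ∈ ({a, b, c, d} : Set X), ∀ q ∈ ({a, b, c, d} : Set X), p ≠ q →
        ¬ N.toMDigraph.Conn {e | e ∉ B.edges} (N.leaf p) (N.leaf q) := by
  classical
  set l : Fin 4 → N.toMDigraph.V := ![N.leaf a, N.leaf b, N.leaf c, N.leaf d] with hl
  have hl0 : l 0 = N.leaf a := by simp [hl]
  have hl1 : l 1 = N.leaf b := by simp [hl]
  have hl2 : l 2 = N.leaf c := by simp [hl]
  have hl3 : l 3 = N.leaf d := by simp [hl]
  have hLab : N.leaf a ≠ N.leaf b := fun h => hab (N.leaf_inj h)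
  have hLac : N.leaf a ≠ N.leaf c := fun h => hac (N.leaf_inj h)
  have hLad : N.leaf a ≠ N.leaf d := fun h => had (N.leaf_inj h)
  have hLbc : N.leaf b ≠ N.leaf c := fun h => hbc (N.leaf_inj h)
  have hLbd : N.leaf b ≠ N.leaf d := fun h => hbd (N.leaf_inj h)
  have hLcd : N.leaf c ≠ N.leaf d := fun h => hcd (N.leaf_inj h)
  have hNCsub : ∀ {g' : N.toMDigraph.E}, N.toMDigraph.IsBridge g' →
      N.toMDigraph.nonBridges ⊆ Set.univ \ {g'} := by
    intro g' hbr e he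
    exact ⟨Set.mem_univ e, fun hh => he (Set.mem_singleton_iff.1 hh ▸ hbr)⟩
  -- no bridge separates the four leaves two against two
  have hk2 : ∀ f, N.toMDigraph.IsBridge f → ∀ v, kcount N.toMDigraph l f v ≠ 2 := by
    intro f hf v hk
    have hcutE : (top N.toMDigraph).IsCutEdge f := (top_isCutEdge_iff f).2 hf
    simp only [kcount] at hk
    obtain ⟨i, j, hij, hO⟩ := Set.ncard_eq_two.mp hk
    have hmem := Set.ext_iff.1 hO
    have hOpp : ∀ t : Fin 4, (t = i ∨ t = j) →
        ¬ N.toMDigraph.Conn (Set.univ \ {f}) v (l t) := by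
      intro t ht
      refine (hmem t).2 ?_
      rcases ht with rfl | rfl
      · exact Set.mem_insert _ _
      · exact Set.mem_insert_of_mem _ rfl
    have hSame : ∀ t : Fin 4, t ≠ i → t ≠ j →
        N.toMDigraph.Conn (Set.univ \ {f}) v (l t) := by
      intro t h1 h2
      by_contra hc
      have := (hmem t).1 hc
      simp only [Set.mem_insert_iff, Set.mem_singleton_iff] at this
      rcases this with h | h
      · exact h1 h
      · exact h2 h
    have mkA : ∀ p q r s : X,
        ¬ N.toMDigraph.Conn (Set.univ \ {f}) v (N.leaf p) →
        ¬ N.toMDigraph.Conn (Set.univ \ {f}) v (N.leaf q) →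
        N.toMDigraph.Conn (Set.univ \ {f}) v (N.leaf r) →
        N.toMDigraph.Conn (Set.univ \ {f}) v (N.leaf s) →
        CutSep (top N.toMDigraph) N.leaf p q r s := by
      intro p q r s hp2 hq2 hr2 hs2
      exact ⟨f, hcutE, same_side_of_opp N.conn hp2 hq2, hr2.symm.trans hs2,
        fun h => hp2 (hr2.trans h.symm)⟩
    have mkB : ∀ p q r s : X,
        N.toMDigraph.Conn (Set.univ \ {f}) v (N.leaf p) →
        N.toMDigraph.Conn (Set.univ \ {f}) v (N.leaf q) →
        ¬ N.toMDigraph.Conn (Set.univ \ {f}) v (N.leaf r) →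
        ¬ N.toMDigraph.Conn (Set.univ \ {f}) v (N.leaf s) →
        CutSep (top N.toMDigraph) N.leaf p q r s := by
      intro p q r s hp2 hq2 hr2 hs2
      exact ⟨f, hcutE, hp2.symm.trans hq2, same_side_of_opp N.conn hr2 hs2,
        fun h => hr2 (hp2.trans h)⟩
    fin_cases i <;> fin_cases j
    · exact absurd rfl hij
    · exact hno1 (mkA a b c d (hl0 ▸ hOpp 0 (by decide)) (hl1 ▸ hOpp 1 (by decide))
        (hl2 ▸ hSame 2 (by decide) (by decide)) (hl3 ▸ hSame 3 (by decide) (by decide)))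
    · exact hno2 (mkA a c b d (hl0 ▸ hOpp 0 (by decide)) (hl2 ▸ hOpp 2 (by decide))
        (hl1 ▸ hSame 1 (by decide) (by decide)) (hl3 ▸ hSame 3 (by decide) (by decide)))
    · exact hno3 (mkA a d b c (hl0 ▸ hOpp 0 (by decide)) (hl3 ▸ hOpp 3 (by decide))
        (hl1 ▸ hSame 1 (by decide) (by decide)) (hl2 ▸ hSame 2 (by decide) (by decide)))
    · exact hno1 (mkA a b c d (hl0 ▸ hOpp 0 (by decide)) (hl1 ▸ hOpp 1 (by decide))
        (hl2 ▸ hSame 2 (by decide) (by decide)) (hl3 ▸ hSame 3 (by decide) (by decide)))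
    · exact absurd rfl hij
    · exact hno3 (mkB a d b c (hl0 ▸ hSame 0 (by decide) (by decide))
        (hl3 ▸ hSame 3 (by decide) (by decide)) (hl1 ▸ hOpp 1 (by decide))
        (hl2 ▸ hOpp 2 (by decide)))
    · exact hno2 (mkB a c b d (hl0 ▸ hSame 0 (by decide) (by decide))
        (hl2 ▸ hSame 2 (by decide) (by decide)) (hl1 ▸ hOpp 1 (by decide))
        (hl3 ▸ hOpp 3 (by decide)))
    · exact hno2 (mkA a c b d (hl0 ▸ hOpp 0 (by decide)) (hl2 ▸ hOpp 2 (by decide))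
        (hl1 ▸ hSame 1 (by decide) (by decide)) (hl3 ▸ hSame 3 (by decide) (by decide)))
    · exact hno3 (mkB a d b c (hl0 ▸ hSame 0 (by decide) (by decide))
        (hl3 ▸ hSame 3 (by decide) (by decide)) (hl1 ▸ hOpp 1 (by decide))
        (hl2 ▸ hOpp 2 (by decide)))
    · exact absurd rfl hij
    · exact hno1 (mkB a b c d (hl0 ▸ hSame 0 (by decide) (by decide))
        (hl1 ▸ hSame 1 (by decide) (by decide)) (hl2 ▸ hOpp 2 (by decide))
        (hl3 ▸ hOpp 3 (by decide)))
    · exact hno3 (mkA a d b c (hl0 ▸ hOpp 0 (by decide)) (hl3 ▸ hOpp 3 (by decide))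
        (hl1 ▸ hSame 1 (by decide) (by decide)) (hl2 ▸ hSame 2 (by decide) (by decide)))
    · exact hno2 (mkB a c b d (hl0 ▸ hSame 0 (by decide) (by decide))
        (hl2 ▸ hSame 2 (by decide) (by decide)) (hl1 ▸ hOpp 1 (by decide))
        (hl3 ▸ hOpp 3 (by decide)))
    · exact hno1 (mkB a b c d (hl0 ▸ hSame 0 (by decide) (by decide))
        (hl1 ▸ hSame 1 (by decide) (by decide)) (hl2 ▸ hOpp 2 (by decide))
        (hl3 ▸ hOpp 3 (by decide)))
    · exact absurd rfl hij
  -- minimizer of mu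
  obtain ⟨vst, hmin⟩ := exists_mu_min (G := N.toMDigraph) l (N.leaf a)
  have hmaj : ∀ f, N.toMDigraph.IsBridge f → kcount N.toMDigraph l f vst ≤ 1 := by
    intro f hf
    have h3 : ¬ 3 ≤ kcount N.toMDigraph l f vst := by
      intro h3
      obtain ⟨w, hw⟩ := mu_decrease N.conn l hf h3
      exact absurd (hmin w) (not_le.2 hw)
    have h2 := hk2 f hf vst
    omega
  -- vst is not one of the four leaf vertices
  have hvleaf : ∀ (x : X) (i1 i2 i3 : Fin 4) (y1 y2 y3 : X),
      l i1 = N.leaf y1 → l i2 = N.leaf y2 → l i3 = N.leaf y3 →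
      i1 ≠ i2 → i1 ≠ i3 → i2 ≠ i3 →
      N.leaf y1 ≠ N.leaf x → N.leaf y2 ≠ N.leaf x → N.leaf y3 ≠ N.leaf x →
      vst ≠ N.leaf x := by
    intro x i1 i2 i3 y1 y2 y3 h1 h2 h3 h12 h13 h23 hy1 hy2 hy3 hveq
    obtain ⟨e0, he0, _⟩ := leaf_in_edge N x
    have hbr := leaf_edge_bridge N he0
    have hopp : ∀ (y : X), N.leaf y ≠ N.leaf x →
        ¬ N.toMDigraph.Conn (Set.univ \ {e0}) vst (N.leaf y) := by
      intro y hy hconn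
      rw [hveq] at hconn
      exact hy (leaf_side N he0 hconn.symm)
    have hge : 3 ≤ kcount N.toMDigraph l e0 vst := by
      have := three_le_ncard (Set.toFinite
          {i : Fin 4 | ¬ N.toMDigraph.Conn (Set.univ \ {e0}) vst (l i)}) h12 h13 h23
        (by rw [Set.mem_setOf_eq, h1]; exact hopp y1 hy1)
        (by rw [Set.mem_setOf_eq, h2]; exact hopp y2 hy2)
        (by rw [Set.mem_setOf_eq, h3]; exact hopp y3 hy3)
      simpa only [kcount] using this
    have := hmaj e0 hbr
    omega
  have hva : vst ≠ N.leaf a :=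
    hvleaf a 1 2 3 b c d hl1 hl2 hl3 (by decide) (by decide) (by decide)
      hLab.symm hLac.symm hLad.symm
  have hvb : vst ≠ N.leaf b :=
    hvleaf b 0 2 3 a c d hl0 hl2 hl3 (by decide) (by decide) (by decide)
      hLab hLbc.symm hLbd.symm
  have hvc : vst ≠ N.leaf c :=
    hvleaf c 0 1 3 a b d hl0 hl1 hl3 (by decide) (by decide) (by decide)
      hLac hLbc hLcd.symm
  have hvd : vst ≠ N.leaf d :=
    hvleaf d 0 1 2 a b c hl0 hl1 hl2 (by decide) (by decide) (by decide)
      hLad hLbd hLcd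
  -- boundary crossing data for a vertex outside the class of vst
  have hboundary : ∀ u : N.toMDigraph.V, u ∉ N.toMDigraph.cls vst →
      ∃ g w, N.toMDigraph.IsBridge g ∧ w ∈ N.toMDigraph.cls vst ∧
        (N.toMDigraph.src g = w ∨ N.toMDigraph.tgt g = w) ∧
        ¬ N.toMDigraph.Conn (Set.univ \ {g}) vst u := by
    intro u hu
    rcases conn_decompose (C := N.toMDigraph.cls vst) (N.conn u vst) hu with
      ⟨hvnot, _⟩ | ⟨w, hw, _, g, _, hcross⟩
    · exact absurd (mem_cls_self vst) hvnot
    · rcases hcross with ⟨h1, h2, h3⟩ | ⟨h1, h2, h3⟩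
      · have hwC : N.toMDigraph.tgt g ∈ N.toMDigraph.cls vst := by rw [h1]; exact hw
        have hbg := bridge_of_cls_boundary_tgt hwC h2
        refine ⟨g, w, hbg, hw, Or.inr h1, ?_⟩
        intro hSS
        have hgF : g ∉ {e ∈ Set.univ | N.toMDigraph.src e ∉ N.toMDigraph.cls vst ∧
            N.toMDigraph.tgt e ∉ N.toMDigraph.cls vst} := fun hm => hm.2.2 hwC
        have hpre := conn_avoid hgF h3
        have hwv : N.toMDigraph.Conn (Set.univ \ {g}) (N.toMDigraph.tgt g) vst :=
          (show N.toMDigraph.Conn N.toMDigraph.nonBridges (N.toMDigraph.tgt g) vst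
            from hwC).mono (hNCsub hbg)
        exact hbg (hpre.symm.trans (hSS.symm.trans hwv.symm))
      · have hwC : N.toMDigraph.src g ∈ N.toMDigraph.cls vst := by rw [h1]; exact hw
        have hbg := bridge_of_cls_boundary_src hwC h2
        refine ⟨g, w, hbg, hw, Or.inl h1, ?_⟩
        intro hSS
        have hgF : g ∉ {e ∈ Set.univ | N.toMDigraph.src e ∉ N.toMDigraph.cls vst ∧
            N.toMDigraph.tgt e ∉ N.toMDigraph.cls vst} := fun hm => hm.2.1 hwC
        have hpre := conn_avoid hgF h3
        have hwv : N.toMDigraph.Conn (Set.univ \ {g}) (N.toMDigraph.src g) vst :=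
          (show N.toMDigraph.Conn N.toMDigraph.nonBridges (N.toMDigraph.src g) vst
            from hwC).mono (hNCsub hbg)
        exact hbg (hwv.trans (hSS.trans hpre))
  -- the class of vst is nontrivial
  have hCnt : ∃ u ∈ N.toMDigraph.cls vst, u ≠ vst := by
    by_contra htriv
    push_neg at htriv
    have hget : ∀ (x : X) (i : Fin 4), l i = N.leaf x → vst ≠ N.leaf x →
        ∃ g, N.toMDigraph.IsBridge g ∧
          (N.toMDigraph.src g = vst ∨ N.toMDigraph.tgt g = vst) ∧
          ¬ N.toMDigraph.Conn (Set.univ \ {g}) vst (l i) := by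
      intro x i hli hvx
      have hxnot : N.leaf x ∉ N.toMDigraph.cls vst := fun hin => hvx (htriv _ hin).symm
      obtain ⟨g, w, hbg, hw, hi, hopp⟩ := hboundary (N.leaf x) hxnot
      have hwv := htriv w hw
      rw [hwv] at hi
      exact ⟨g, hbg, hi, by rw [hli]; exact hopp⟩
    obtain ⟨ga, hga⟩ := hget a 0 hl0 hva
    obtain ⟨gb, hgb⟩ := hget b 1 hl1 hvb
    obtain ⟨gc, hgc⟩ := hget c 2 hl2 hvc
    obtain ⟨gd, hgd⟩ := hget d 3 hl3 hvd
    have hpair : ∀ (g' : N.toMDigraph.E) (i j : Fin 4), i ≠ j →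
        ¬ N.toMDigraph.Conn (Set.univ \ {g'}) vst (l i) →
        ¬ N.toMDigraph.Conn (Set.univ \ {g'}) vst (l j) →
        N.toMDigraph.IsBridge g' → False := by
      intro g' i j hij hi hj hbr
      have h2 := kcount_ge_two hij hi hj
      have h1 := hmaj g' hbr
      omega
    by_cases e12 : ga = gb
    · exact hpair ga 0 1 (by decide) hga.2.2 (by rw [e12]; exact hgb.2.2) hga.1
    by_cases e13 : ga = gc
    · exact hpair ga 0 2 (by decide) hga.2.2 (by rw [e13]; exact hgc.2.2) hga.1
    by_cases e14 : ga = gd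
    · exact hpair ga 0 3 (by decide) hga.2.2 (by rw [e14]; exact hgd.2.2) hga.1
    by_cases e23 : gb = gc
    · exact hpair gb 1 2 (by decide) hgb.2.2 (by rw [e23]; exact hgc.2.2) hgb.1
    by_cases e24 : gb = gd
    · exact hpair gb 1 3 (by decide) hgb.2.2 (by rw [e24]; exact hgd.2.2) hgb.1
    by_cases e34 : gc = gd
    · exact hpair gc 2 3 (by decide) hgc.2.2 (by rw [e34]; exact hgd.2.2) hgc.1
    have h4 := four_le_degree hga.2.1 hgb.2.1 hgc.2.1 hgd.2.1 e12 e13 e14 e23 e24 e34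
    have h3 := degree_le_three N vst
    omega
  have hnt_at : ∀ w ∈ N.toMDigraph.cls vst, ∃ u ∈ N.toMDigraph.cls vst, u ≠ w := by
    intro w hw
    by_cases hwv : w = vst
    · obtain ⟨u, hu, hune⟩ := hCnt
      exact ⟨u, hu, hwv ▸ hune⟩
    · exact ⟨vst, mem_cls_self _, fun h => hwv h.symm⟩
  have hleafC : ∀ x : X, N.leaf x ∉ N.toMDigraph.cls vst := by
    intro x hx
    have hcl := cls_eq_of_mem hx
    rw [cls_leaf] at hcl
    obtain ⟨u, hu, hune⟩ := hCnt
    have h1 : u = N.leaf x := by rw [← hcl] at hu; exact hu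
    have h2 : vst = N.leaf x := by
      have := mem_cls_self (G := N.toMDigraph) vst
      rw [← hcl] at this
      exact this
    exact hune (h1.trans h2.symm)
  -- the separating blob
  refine ⟨N.toMDigraph.blobOf vst, blobOf_isBlob N.conn vst, ?_⟩
  intro p hp q hq hpq hconn
  have hidx : ∀ r : X, r ∈ ({a, b, c, d} : Set X) → ∃ i, l i = N.leaf r := by
    intro r hr
    simp only [Set.mem_insert_iff, Set.mem_singleton_iff] at hr
    rcases hr with rfl | rfl | rfl | rfl
    exacts [⟨0, hl0⟩, ⟨1, hl1⟩, ⟨2, hl2⟩, ⟨3, hl3⟩]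
  obtain ⟨ip, hip⟩ := hidx p hp
  obtain ⟨iq, hiq⟩ := hidx q hq
  have hipq : ip ≠ iq := by
    intro h
    apply hpq
    apply N.leaf_inj
    rw [← hip, ← hiq, h]
  have hSbr : ∀ w ∈ N.toMDigraph.cls vst, ∀ e, e ∉ (N.toMDigraph.blobOf vst).edges →
      (N.toMDigraph.src e = w ∨ N.toMDigraph.tgt e = w) → N.toMDigraph.IsBridge e := by
    intro w hw e heS hi
    by_contra hnb
    apply heS
    rcases hi with h | h
    · have hsrc : N.toMDigraph.src e ∈ N.toMDigraph.cls vst := by rw [h]; exact hw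
      have htgt : N.toMDigraph.tgt e ∈ N.toMDigraph.cls vst :=
        (conn_of_edge (show e ∈ N.toMDigraph.nonBridges from hnb)).symm.trans hsrc
      exact ⟨hnb, hsrc, htgt⟩
    · have htgt : N.toMDigraph.tgt e ∈ N.toMDigraph.cls vst := by rw [h]; exact hw
      have hsrc : N.toMDigraph.src e ∈ N.toMDigraph.cls vst :=
        (conn_of_edge (show e ∈ N.toMDigraph.nonBridges from hnb)).trans htgt
      exact ⟨hnb, hsrc, htgt⟩
  rcases conn_decompose (C := N.toMDigraph.cls vst) hconn (hleafC p) with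
    ⟨_, hFC⟩ | ⟨w, hw, hwq, g, hgS, hcross⟩
  · -- the walk avoids the class entirely
    obtain ⟨g, w, hbg, hw, hi, hoppp⟩ := hboundary (N.leaf p) (hleafC p)
    have hgF : g ∉ {e ∈ {e | e ∉ (N.toMDigraph.blobOf vst).edges} |
        N.toMDigraph.src e ∉ N.toMDigraph.cls vst ∧
        N.toMDigraph.tgt e ∉ N.toMDigraph.cls vst} := by
      intro hm
      rcases hi with h | h
      · exact hm.2.1 (by rw [h]; exact hw)
      · exact hm.2.2 (by rw [h]; exact hw)
    have hSSpq := conn_avoid hgF hFC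
    have hoppq : ¬ N.toMDigraph.Conn (Set.univ \ {g}) vst (N.leaf q) :=
      fun hc => hoppp (hc.trans hSSpq.symm)
    have hoppp' : ¬ N.toMDigraph.Conn (Set.univ \ {g}) vst (l ip) := by
      rw [hip]; exact hoppp
    have hoppq' : ¬ N.toMDigraph.Conn (Set.univ \ {g}) vst (l iq) := by
      rw [hiq]; exact hoppq
    have h2 := kcount_ge_two hipq hoppp' hoppq'
    have h1 := hmaj g hbg
    omega
  · -- the walk passes through the class at w
    have hgi : N.toMDigraph.src g = w ∨ N.toMDigraph.tgt g = w := by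
      rcases hcross with ⟨h1, _, _⟩ | ⟨h1, _, _⟩
      · exact Or.inr h1
      · exact Or.inl h1
    have hpw : N.toMDigraph.Conn {e | e ∉ (N.toMDigraph.blobOf vst).edges} (N.leaf p) w := by
      rcases hcross with ⟨h1, h2, h3⟩ | ⟨h1, h2, h3⟩
      · exact (h3.mono (fun e he => he.1)).tail ⟨g, hgS, Or.inl ⟨rfl, h1⟩⟩
      · exact (h3.mono (fun e he => he.1)).tail ⟨g, hgS, Or.inr ⟨h1, rfl⟩⟩
    have hfwbr := hSbr w hw g hgS hgi
    have hpne : N.leaf p ≠ w := fun h => hleafC p (by rw [h]; exact hw)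
    have hqne : N.leaf q ≠ w := fun h => hleafC q (by rw [h]; exact hw)
    have huniq : ∀ e, e ∉ (N.toMDigraph.blobOf vst).edges →
        (N.toMDigraph.src e = w ∨ N.toMDigraph.tgt e = w) → e = g :=
      fun e heS hi2 => bridge_unique_at N hw (hnt_at w hw) (hSbr w hw e heS hi2) hfwbr hi2 hgi
    have hwv : N.toMDigraph.Conn (Set.univ \ {g}) w vst :=
      (show N.toMDigraph.Conn N.toMDigraph.nonBridges w vst from hw).mono (hNCsub hfwbr)
    have hoppp : ¬ N.toMDigraph.Conn (Set.univ \ {g}) vst (N.leaf p) := by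
      intro hSS
      have hSSpw : N.toMDigraph.Conn (Set.univ \ {g}) (N.leaf p) w := hSS.symm.trans hwv.symm
      have hdrop := conn_drop_bridge N.conn hfwbr hpw hSSpw
      obtain ⟨e2, he2, hi2⟩ := exists_edge_at hdrop hpne
      exact he2.2 (Set.mem_singleton_iff.2 (huniq e2 he2.1 hi2))
    have hoppq : ¬ N.toMDigraph.Conn (Set.univ \ {g}) vst (N.leaf q) := by
      intro hSS
      have hSSqw : N.toMDigraph.Conn (Set.univ \ {g}) (N.leaf q) w := hSS.symm.trans hwv.symm
      have hdrop := conn_drop_bridge N.conn hfwbr hwq.symm hSSqw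
      obtain ⟨e2, he2, hi2⟩ := exists_edge_at hdrop hqne
      exact he2.2 (Set.mem_singleton_iff.2 (huniq e2 he2.1 hi2))
    have hoppp' : ¬ N.toMDigraph.Conn (Set.univ \ {g}) vst (l ip) := by
      rw [hip]; exact hoppp
    have hoppq' : ¬ N.toMDigraph.Conn (Set.univ \ {g}) vst (l iq) := by
      rw [hiq]; exact hoppq
    have h2 := kcount_ge_two hipq hoppp' hoppq'
    have h1 := hmaj g hfwbr
    omega

end Aux11

end PhyloNetwork
/-- Let `N⁺` be a rooted binary phylogenetic network on taxon set `X` with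
`|X| ≥ 4` and let `Q = {a,b,c,d} ⊆ X` be four distinct taxa.  The following
are equivalent:
(1) `Q` determines a blob of `N⁺`, i.e. `Q` is a B-quartet;
(2) there is a single blob of `N⁺` such that deletion of all edges of that
    blob leaves the elements of `Q` in four distinct connected components;
(3) the unresolved quartet on `Q` is displayed on the reduced unrooted tree of
    blobs `T_rd(N⁻)`, i.e. no edge of `T_rd(N⁻)` — equivalently no cut edge of
    the network — separates exactly two elements of `Q` from the other two. -/
theorem stmt_12 {X : Type} (N : PhyloNetwork X) (a b c d : X)
    (hpair : List.Pairwise (· ≠ ·) [a, b, c, d]) :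
    (BQuartetIn (top N.toMDigraph) N.leaf a b c d ↔
      (∃ B : Subgraph N.toMDigraph, IsBlobIn (top N.toMDigraph) B ∧
        ∀ p ∈ ({a, b, c, d} : Set X), ∀ q ∈ ({a, b, c, d} : Set X), p ≠ q →
          ¬ N.toMDigraph.Conn {e | e ∉ B.edges} (N.leaf p) (N.leaf q))) ∧
    (BQuartetIn (top N.toMDigraph) N.leaf a b c d ↔
      ¬ (CutSep (top N.toMDigraph) N.leaf a b c d ∨
         CutSep (top N.toMDigraph) N.leaf a c b d ∨
         CutSep (top N.toMDigraph) N.leaf a d b c)) := by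
  obtain ⟨h1, h2⟩ := List.pairwise_cons.1 hpair
  obtain ⟨h3, h4⟩ := List.pairwise_cons.1 h2
  obtain ⟨h5, -⟩ := List.pairwise_cons.1 h4
  have hab : a ≠ b := h1 b (by simp)
  have hac : a ≠ c := h1 c (by simp)
  have had : a ≠ d := h1 d (by simp)
  have hbc : b ≠ c := h3 c (by simp)
  have hbd : b ≠ d := h3 d (by simp)
  have hcd : c ≠ d := h5 d (by simp)
  have ma : a ∈ ({a, b, c, d} : Set X) := by simp
  have mb : b ∈ ({a, b, c, d} : Set X) := by simp
  have mc : c ∈ ({a, b, c, d} : Set X) := by simp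
  have md : d ∈ ({a, b, c, d} : Set X) := by simp
  constructor
  · constructor
    · rintro ⟨B, hB, hdet⟩
      have hno1 := PhyloNetwork.not_cutsep_of_determines N hB hdet ma mb mc md hab hcd
      have hno2 := PhyloNetwork.not_cutsep_of_determines N hB hdet ma mc mb md hac hbd
      have hno3 := PhyloNetwork.not_cutsep_of_determines N hB hdet ma md mb mc had hbc
      exact PhyloNetwork.exists_blob_sep N a b c d hab hac had hbc hbd hcd hno1 hno2 hno3
    · rintro ⟨B, hB, hsep⟩
      exact ⟨B, hB, PhyloNetwork.determines_of_blob_sep N hB ⟨a, b, ma, mb, hab⟩ hsep⟩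
  · constructor
    · rintro ⟨B, hB, hdet⟩ hcs
      rcases hcs with h | h | h
      · exact PhyloNetwork.not_cutsep_of_determines N hB hdet ma mb mc md hab hcd h
      · exact PhyloNetwork.not_cutsep_of_determines N hB hdet ma mc mb md hac hbd h
      · exact PhyloNetwork.not_cutsep_of_determines N hB hdet ma md mb mc had hbc h
    · intro hno
      have hno1 : ¬ CutSep (top N.toMDigraph) N.leaf a b c d := fun h => hno (Or.inl h)
      have hno2 : ¬ CutSep (top N.toMDigraph) N.leaf a c b d :=
        fun h => hno (Or.inr (Or.inl h))
      have hno3 : ¬ CutSep (top N.toMDigraph) N.leaf a d b c :=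
        fun h => hno (Or.inr (Or.inr h))
      obtain ⟨B, hB, hsep⟩ :=
        PhyloNetwork.exists_blob_sep N a b c d hab hac had hbc hbd hcd hno1 hno2 hno3
      exact ⟨B, hB, PhyloNetwork.determines_of_blob_sep N hB ⟨a, b, ma, mb, hab⟩ hsep⟩
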